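/- In the group SO(3,ℝ), let g = diag(-1, 1, -1) and for θ ∈ ℝ let a_θ be the rotation by angle θ about the z-axis. Then for every positive integer n, the iterated commutator [a_θ, ₙg] equals a_{(-2)^n θ}. -/

import Mathlib

/-- The left-normed iterated commutator `[x, ₙg]`: `engel g x 0 = x` and
`engel g x (n+1) = [engel g x n, g] = (engel g x n)⁻¹ * g⁻¹ * (engel g x n) * g`. -/
def engel {G : Type*} [Group G] (g x : G) : ℕ → G
  | 0 => x
  | n + 1 => (engel g x n)⁻¹ * g⁻¹ * engel g x n * g

/-- `E` is an Engel sink of `g`: for every `x` all sufficiently long commutators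
`[x, ₙg]` lie in `E`. -/
def IsEngelSink {G : Type*} [Group G] (g : G) (E : Set G) : Prop :=
  ∀ x : G, ∃ N : ℕ, ∀ n : ℕ, N ≤ n → engel g x n ∈ E

/-- `SO(3,ℝ)`: the subgroup of the orthogonal group `O(3,ℝ)` of matrices of determinant 1. -/
def SO3 : Subgroup (Matrix.orthogonalGroup (Fin 3) ℝ) where
  carrier := {A | (A : Matrix (Fin 3) (Fin 3) ℝ).det = 1}
  one_mem' := by simp
  mul_mem' := by
    intro A B hA hB
    simp only [Set.mem_setOf_eq, Matrix.UnitaryGroup.mul_val, Matrix.det_mul] at *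
    rw [hA, hB, one_mul]
  inv_mem' := by
    intro A hA
    simp only [Set.mem_setOf_eq] at *
    rw [Matrix.UnitaryGroup.inv_val, Matrix.star_eq_conjTranspose,
      Matrix.det_conjTranspose, hA, star_one]

/-- auxiliary: the matrix of an element of `SO3`. -/
def SO3mat (x : SO3) : Matrix (Fin 3) (Fin 3) ℝ :=
  ((x : Matrix.orthogonalGroup (Fin 3) ℝ) : Matrix (Fin 3) (Fin 3) ℝ)

lemma SO3mat_mul (x y : SO3) : SO3mat (x * y) = SO3mat x * SO3mat y := rfl

lemma SO3mat_one : SO3mat 1 = 1 := rfl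

lemma SO3_ext {x y : SO3} (h : SO3mat x = SO3mat y) : x = y :=
  Subtype.ext (Subtype.ext h)

/-- main theorem -/
theorem so3_iterated_commutator_rotation
    (a : ℝ → SO3) (g : SO3)
    (ha : ∀ θ : ℝ, ((a θ : Matrix.orthogonalGroup (Fin 3) ℝ) : Matrix (Fin 3) (Fin 3) ℝ)
      = !![Real.cos θ, Real.sin θ, 0; -Real.sin θ, Real.cos θ, 0; 0, 0, 1])
    (hg : ((g : Matrix.orthogonalGroup (Fin 3) ℝ) : Matrix (Fin 3) (Fin 3) ℝ)
      = !![-1, 0, 0; 0, 1, 0; 0, 0, -1]) :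
    ∀ (n : ℕ), 1 ≤ n → ∀ θ : ℝ, engel g (a θ) n = a ((-2 : ℝ) ^ n * θ) := by
  have ha' : ∀ θ : ℝ, SO3mat (a θ)
      = !![Real.cos θ, Real.sin θ, 0; -Real.sin θ, Real.cos θ, 0; 0, 0, 1] := ha
  have hg' : SO3mat g = !![-1, 0, 0; 0, 1, 0; 0, 0, -1] := hg
  have ha0 : a 0 = 1 := by
    apply SO3_ext
    rw [ha', SO3mat_one, Matrix.one_fin_three]
    norm_num
  have haa : ∀ φ ψ : ℝ, a φ * a ψ = a (φ + ψ) := by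
    intro φ ψ
    apply SO3_ext
    rw [SO3mat_mul, ha', ha', ha', Matrix.mul_fin_three, Real.cos_add, Real.sin_add]
    norm_num
    exact ⟨⟨by ring, by ring⟩, by ring, by ring⟩
  have hainv : ∀ φ : ℝ, (a φ)⁻¹ = a (-φ) := by
    intro φ
    apply inv_eq_of_mul_eq_one_right
    rw [haa, add_neg_cancel, ha0]
  have hgg : g * g = 1 := by
    apply SO3_ext
    rw [SO3mat_mul, hg', SO3mat_one, Matrix.mul_fin_three, Matrix.one_fin_three]
    norm_num
  have hginv : g⁻¹ = g := inv_eq_of_mul_eq_one_right hgg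
  have hconj : ∀ φ : ℝ, g⁻¹ * a φ * g = a (-φ) := by
    intro φ
    apply SO3_ext
    rw [SO3mat_mul, SO3mat_mul, hginv, hg', ha', ha', Matrix.mul_fin_three,
      Matrix.mul_fin_three, Real.cos_neg, Real.sin_neg]
    norm_num
  have key : ∀ φ : ℝ, (a φ)⁻¹ * g⁻¹ * a φ * g = a (-2 * φ) := by
    intro φ
    rw [hainv, mul_assoc, mul_assoc, ← mul_assoc g⁻¹, hconj, haa]
    congr 1
    ring
  intro n hn
  induction n with
  | zero => omega
  | succ m ih =>
    intro θ
    rcases Nat.eq_or_lt_of_le hn with h1 | h1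
    · simp only [← h1]
      show (a θ)⁻¹ * g⁻¹ * engel g (a θ) 0 * g = _
      show (a θ)⁻¹ * g⁻¹ * a θ * g = _
      rw [key]
      norm_num
    · have hm : 1 ≤ m := by omega
      show (engel g (a θ) m)⁻¹ * g⁻¹ * engel g (a θ) m * g = _
      rw [ih hm θ, key]
      congr 1
      ring
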